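/- arXiv:0708.1675 — 2 statements merged into one kernel-verified Lean document; each statement's English description precedes it below -/
import Mathlib

section
/- Every element π of the alternating subgroup B_n^+ of the hyperoctahedral group has a unique presentation π = γ_n^{k_n} γ_{n−1}^{k_{n−1}} ⋯ γ_1^{k_1} with 0 ≤ k_n < n and 0 ≤ k_i < 2i for all 1 ≤ i ≤ n−1. -/
open scoped Classical

/-- `prodPow a k` is the ordered product `a 0 ^ k 0 * a 1 ^ k 1 * ⋯ * a (n-1) ^ k (n-1)`. -/
def prodPow {G : Type*} [Group G] {n : ℕ} (a : Fin n → G) (k : Fin n → ℕ) : G :=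
  (List.ofFn fun i => a i ^ k i).prod

/-- The sequence `a` gives a unique presentation `g = a 0 ^ k 0 * ⋯ * a (n-1) ^ k (n-1)`
with `0 ≤ k i < m i` for every element `g` of the group. -/
def IsUniqueProd {G : Type*} [Group G] {n : ℕ} (a : Fin n → G) (m : Fin n → ℕ) : Prop :=
  ∀ g : G, ∃! k : (i : Fin n) → Fin (m i), g = prodPow a fun i => (k i : ℕ)

/-- A perfect basis: every group element has a unique presentation with each exponent
below the order of the corresponding basis element. -/
def IsPerfectBasis {G : Type*} [Group G] {n : ℕ} (a : Fin n → G) : Prop :=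
  IsUniqueProd a fun i => orderOf (a i)

open scoped Classical in
/-- The flag major index with respect to the sequence `a` with exponent bounds `m`:
the sum of the exponents in the unique presentation (junk value `0` if no unique
presentation exists). -/
noncomputable def fmajSeq {G : Type*} [Group G] {n : ℕ} (a : Fin n → G) (m : Fin n → ℕ)
    (g : G) : ℕ :=
  if h : ∃! k : (i : Fin n) → Fin (m i), g = prodPow a fun i => (k i : ℕ) then
    ∑ i, (h.choose i : ℕ)
  else 0


/-- Encoding of the letters `{±1, …, ±n}`: letter `j` is `(⟨j-1⟩, false)` and `-j` is
`(⟨j-1⟩, true)`. -/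
abbrev SF (n : ℕ) := Fin n × Bool

/-- Negation of a letter. -/
def negx {n : ℕ} (x : SF n) : SF n := (x.1, !x.2)

/-- The hyperoctahedral group `B_n`: permutations `w` of `{±1,…,±n}` with `w(-i) = -w(i)`. -/
def BSet (n : ℕ) : Set (Equiv.Perm (SF n)) := {w | ∀ x, w (negx x) = negx (w x)}

/-- `sadj n j` is the Coxeter generator `s_{j+1}` of `B_n`: the signed permutation
exchanging the values `j+1` and `j+2` (1-indexed) as well as `-(j+1)` and `-(j+2)`. -/
def sadj (n j : ℕ) : Equiv.Perm (SF n) :=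
  if h : j + 1 < n then
    Equiv.swap (⟨j, Nat.lt_of_succ_lt h⟩, false) (⟨j + 1, h⟩, false) *
      Equiv.swap (⟨j, Nat.lt_of_succ_lt h⟩, true) (⟨j + 1, h⟩, true)
  else 1

/-- The generator `s_0 = [-1, 2, …, n]` of `B_n`. -/
def s0B (n : ℕ) : Equiv.Perm (SF n) :=
  if h : 0 < n then Equiv.swap (⟨0, h⟩, false) (⟨0, h⟩, true) else 1

/-- The generator `s_0' = [-2, -1, 3, …, n]` of `D_n`. -/
def s0D (n : ℕ) : Equiv.Perm (SF n) :=
  if h : 2 ≤ n then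
    Equiv.swap (⟨0, by omega⟩, false) (⟨1, by omega⟩, true) *
      Equiv.swap (⟨1, by omega⟩, false) (⟨0, by omega⟩, true)
  else 1

/-- The signed permutation `v_n = [1, 2, …, n-1, -n]`. -/
def muP (n : ℕ) : Equiv.Perm (SF n) :=
  if h : 0 < n then Equiv.swap (⟨n - 1, by omega⟩, false) (⟨n - 1, by omega⟩, true) else 1

/-- `betaP n i = β_i = [-i, 1, 2, …, i-1, i+1, …, n] = s_{i-1} ⋯ s_1 s_0`. -/
def betaP (n i : ℕ) : Equiv.Perm (SF n) :=
  ((List.range (i - 1)).reverse.map (sadj n)).prod * s0B n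

/-- `deltaP n i = δ_i` for `1 ≤ i ≤ n`: for `i ≤ n-1`,
`δ_i = [-i, 1, 2, …, i-1, i+1, …, n-1, -n] = β_i v_n`, while `δ_n = [n, 1, 2, …, n-1]`. -/
def deltaP (n i : ℕ) : Equiv.Perm (SF n) :=
  if i = n then ((List.range (n - 1)).reverse.map (sadj n)).prod
  else betaP n i * muP n

/-- The Coxeter generating set `S = {s_0, s_1, …, s_{n-1}}` of `B_n`. -/
def SgenB (n : ℕ) : Set (Equiv.Perm (SF n)) :=
  {w | w = s0B n ∨ ∃ j : ℕ, j + 1 < n ∧ w = sadj n j}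

/-- The Coxeter generating set `S' = {s_0', s_1, …, s_{n-1}}` of `D_n`. -/
def SgenD (n : ℕ) : Set (Equiv.Perm (SF n)) :=
  {w | w = s0D n ∨ ∃ j : ℕ, j + 1 < n ∧ w = sadj n j}

/-- The word length of `g` with respect to a set `S` of generators: the least `l` such
that `g` is a product of `l` elements of `S`. -/
noncomputable def wordLength {G : Type*} [Group G] (S : Set G) (g : G) : ℕ :=
  sInf {l | ∃ w : List G, (∀ x ∈ w, x ∈ S) ∧ w.length = l ∧ w.prod = g}

/-- The group `D_n` of even signed permutations: elements of `B_n` with an even number of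
negative entries in their window. -/
def DSet (n : ℕ) : Set (Equiv.Perm (SF n)) :=
  {w | w ∈ BSet n ∧ Even (Finset.univ.filter fun i : Fin n => (w (i, false)).2 = true).card}

/-- The alternating subgroup `B_n^+` of `B_n`: elements of even Coxeter length. -/
def BplusSet (n : ℕ) : Set (Equiv.Perm (SF n)) :=
  {w | w ∈ BSet n ∧ Even (wordLength (SgenB n) w)}

/-- The bijection `ψ : D_n → B_n^+`: `ψ(w) = w` if `w ∈ B_n^+`, otherwise `ψ(w) = w·v_n`
(negating the last letter of the window of `w`). -/
noncomputable def psiP (n : ℕ) (w : Equiv.Perm (SF n)) : Equiv.Perm (SF n) :=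
  if w ∈ BplusSet n then w else w * muP n

/-- The generating set `R = {r_1, …, r_{n-1}}` of `B_n^+`, where `r_1 = [2, -1, 3, …, n]`
and `r_i = [-1, 2, …, i-1, i+1, i, i+2, …, n]` for `2 ≤ i ≤ n-1`; here `r_i = s_0 s_i`. -/
def RSet (n : ℕ) : Set (Equiv.Perm (SF n)) :=
  {w | ∃ i : ℕ, 1 ≤ i ∧ i ≤ n - 1 ∧ w = s0B n * sadj n (i - 1)}

/-- The set `R ∪ R⁻¹`. -/
def RRinv (n : ℕ) : Set (Equiv.Perm (SF n)) :=
  RSet n ∪ {w | w⁻¹ ∈ RSet n}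

/-- The basis `b = (β_n, β_{n-1}, …, β_1)` for `B_n`. -/
def bSeq (n : ℕ) : Fin n → Equiv.Perm (SF n) := fun j => betaP n (n - j.val)

/-- The basis `d = (δ_n, δ_{n-1}, …, δ_1)` for `D_n`. -/
def dSeq (n : ℕ) : Fin n → Equiv.Perm (SF n) := fun j => deltaP n (n - j.val)

/-- The basis `c = (γ_n, γ_{n-1}, …, γ_1) = (ψ(δ_n), …, ψ(δ_1))` for `B_n^+`. -/
noncomputable def cSeq (n : ℕ) : Fin n → Equiv.Perm (SF n) :=
  fun j => psiP n (deltaP n (n - j.val))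

/-- The exponent bounds for the bases `d` and `c`: `k_n < n` and `k_i < 2i` for `i < n`. -/
def mD (n : ℕ) : Fin n → ℕ := fun j => if j.val = 0 then n else 2 * (n - j.val)

/-- The exponent bounds for the basis `b`: `k_i < 2i`. -/
def mB (n : ℕ) : Fin n → ℕ := fun j => 2 * (n - j.val)


section Dev
variable {n : ℕ}

lemma negx_negx (x : SF n) : negx (negx x) = x := by cases x; simp [negx]

lemma negx_fst (x : SF n) : (negx x).1 = x.1 := rfl

lemma one_mem_BSet : (1 : Equiv.Perm (SF n)) ∈ BSet n := fun _ => rfl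

lemma mul_mem_BSet {u w : Equiv.Perm (SF n)} (hu : u ∈ BSet n) (hw : w ∈ BSet n) :
    u * w ∈ BSet n := by
  intro x
  simp only [Equiv.Perm.mul_apply, hw x, hu (w x)]

lemma inv_mem_BSet {w : Equiv.Perm (SF n)} (hw : w ∈ BSet n) : w⁻¹ ∈ BSet n := by
  intro x
  have h := hw (w⁻¹ x)
  simp only [Equiv.Perm.coe_inv, Equiv.apply_symm_apply] at h
  have := congrArg (⇑w⁻¹) h
  simpa using this.symm

lemma pow_mem_BSet {w : Equiv.Perm (SF n)} (hw : w ∈ BSet n) (k : ℕ) : w ^ k ∈ BSet n := by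
  induction k with
  | zero => simpa using one_mem_BSet
  | succ k ih => rw [pow_succ]; exact mul_mem_BSet ih hw

lemma pairSwap_mem_BSet (p q : Fin n) :
    Equiv.swap (p, false) (q, false) * Equiv.swap (p, true) (q, true) ∈ BSet n := by
  rintro ⟨a, b⟩
  cases b <;>
    simp [negx, Equiv.Perm.mul_apply, Equiv.swap_apply_def, Prod.ext_iff] <;>
    split_ifs <;> simp_all

lemma negSwap_mem_BSet (p : Fin n) : Equiv.swap (p, false) (p, true) ∈ BSet n := by
  rintro ⟨a, b⟩
  cases b <;>
    simp [negx, Equiv.swap_apply_def, Prod.ext_iff] <;>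
    split_ifs <;> simp_all

lemma sadj_mem_BSet (j : ℕ) : sadj n j ∈ BSet n := by
  unfold sadj
  split
  · exact pairSwap_mem_BSet _ _
  · exact one_mem_BSet

lemma s0B_mem_BSet : s0B n ∈ BSet n := by
  unfold s0B; split
  · exact negSwap_mem_BSet _
  · exact one_mem_BSet

lemma muP_mem_BSet : muP n ∈ BSet n := by
  unfold muP; split
  · exact negSwap_mem_BSet _
  · exact one_mem_BSet

lemma list_prod_mem_BSet {l : List (Equiv.Perm (SF n))} (h : ∀ x ∈ l, x ∈ BSet n) :
    l.prod ∈ BSet n := by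
  induction l with
  | nil => simpa using one_mem_BSet
  | cons a l ih =>
    rw [List.prod_cons]
    exact mul_mem_BSet (h a (by simp)) (ih fun x hx => h x (by simp [hx]))


/-! ### Pointwise actions -/

lemma sadj_apply_lo {j : ℕ} (h : j + 1 < n) (b : Bool) :
    sadj n j (⟨j, by omega⟩, b) = (⟨j + 1, h⟩, b) := by
  unfold sadj
  rw [dif_pos h]
  cases b <;>
    simp [Equiv.Perm.mul_apply, Equiv.swap_apply_def, Prod.ext_iff, Fin.ext_iff] <;> omega

lemma sadj_apply_hi {j : ℕ} (h : j + 1 < n) (b : Bool) :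
    sadj n j (⟨j + 1, h⟩, b) = (⟨j, by omega⟩, b) := by
  unfold sadj
  rw [dif_pos h]
  cases b <;>
    simp [Equiv.Perm.mul_apply, Equiv.swap_apply_def, Prod.ext_iff, Fin.ext_iff] <;> omega

lemma sadj_apply_other {j : ℕ} (a : Fin n) (b : Bool) (h1 : a.val ≠ j) (h2 : a.val ≠ j + 1) :
    sadj n j (a, b) = (a, b) := by
  unfold sadj
  split
  · cases b <;>
      simp [Equiv.Perm.mul_apply, Equiv.swap_apply_def, Prod.ext_iff, Fin.ext_iff] <;>
      split_ifs <;> simp_all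
  · rfl

lemma s0B_apply_zero (h : 0 < n) (b : Bool) : s0B n (⟨0, h⟩, b) = (⟨0, h⟩, !b) := by
  unfold s0B
  rw [dif_pos h]
  cases b <;> simp [Equiv.swap_apply_def, Prod.ext_iff]

lemma s0B_apply_other (a : Fin n) (b : Bool) (h : a.val ≠ 0) : s0B n (a, b) = (a, b) := by
  unfold s0B
  split
  · cases b <;> simp [Equiv.swap_apply_def, Prod.ext_iff, Fin.ext_iff, h]
  · rfl

lemma muP_apply_top (h : 0 < n) (b : Bool) :
    muP n (⟨n - 1, by omega⟩, b) = (⟨n - 1, by omega⟩, !b) := by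
  unfold muP
  rw [dif_pos h]
  cases b <;> simp [Equiv.swap_apply_def, Prod.ext_iff]

lemma muP_apply_other (a : Fin n) (b : Bool) (h : a.val ≠ n - 1) : muP n (a, b) = (a, b) := by
  unfold muP
  split
  · cases b <;> simp [Equiv.swap_apply_def, Prod.ext_iff, Fin.ext_iff, h]
  · rfl

lemma muP_mul_self : muP n * muP n = 1 := by
  unfold muP
  split
  · exact Equiv.swap_mul_self _ _
  · simp

/-- `cP n i = s_{i-1} ⋯ s_1` (the product of the first `i` adjacent generators,
largest first). -/
def cP (n i : ℕ) : Equiv.Perm (SF n) := ((List.range i).reverse.map (sadj n)).prod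

lemma cP_zero : cP n 0 = 1 := rfl

lemma cP_succ (i : ℕ) : cP n (i + 1) = sadj n i * cP n i := by
  unfold cP
  rw [List.range_succ, List.reverse_append]
  simp

lemma cP_mem_BSet (i : ℕ) : cP n i ∈ BSet n := by
  apply list_prod_mem_BSet
  intro x hx
  simp only [List.mem_map] at hx
  obtain ⟨j, _, rfl⟩ := hx
  exact sadj_mem_BSet j

lemma cP_apply_zero {i : ℕ} (hi : i + 1 ≤ n) (h0 : 0 < n) (b : Bool) :
    cP n i (⟨0, h0⟩, b) = (⟨i, by omega⟩, b) := by
  induction i with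
  | zero => rfl
  | succ i ih =>
    rw [cP_succ]
    simp only [Equiv.Perm.mul_apply]
    rw [ih (by omega)]
    exact sadj_apply_lo (by omega) b

lemma cP_apply_other {i : ℕ} (hii : i ≤ n) (a : Fin n) (b : Bool) (h : i < a.val) :
    cP n i (a, b) = (a, b) := by
  induction i with
  | zero => rfl
  | succ i ih =>
    rw [cP_succ]
    simp only [Equiv.Perm.mul_apply]
    rw [ih (by omega) (by omega)]
    exact sadj_apply_other _ _ (by omega) (by omega)

lemma cP_apply_step {i : ℕ} (hi : i ≤ n) {a : ℕ} (ha1 : 1 ≤ a) (ha2 : a ≤ i) (han : a < n)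
    (b : Bool) : cP n i (⟨a, han⟩, b) = (⟨a - 1, by omega⟩, b) := by
  induction i with
  | zero => omega
  | succ i ih =>
    rw [cP_succ]
    simp only [Equiv.Perm.mul_apply]
    rcases Nat.lt_or_ge a (i + 1) with h | h
    · rw [ih (by omega) (by omega)]
      exact sadj_apply_other _ _ (by simp; omega) (by simp; omega)
    · have ha : a = i + 1 := by omega
      subst ha
      rw [cP_apply_other (by omega) ⟨i + 1, han⟩ b (by simp)]
      have := sadj_apply_hi (n := n) (j := i) (by omega) b
      simpa using this


/-! ### betaP and deltaP actions -/

lemma betaP_eq (i : ℕ) : betaP n i = cP n (i - 1) * s0B n := rfl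

lemma betaP_mem_BSet (i : ℕ) : betaP n i ∈ BSet n :=
  mul_mem_BSet (cP_mem_BSet _) s0B_mem_BSet

lemma deltaP_n_eq : deltaP n n = cP n (n - 1) := by
  unfold deltaP cP
  rw [if_pos rfl]

lemma betaP_apply_zero {i : ℕ} (hi1 : 1 ≤ i) (hin : i ≤ n) (b : Bool) :
    betaP n i (⟨0, by omega⟩, b) = (⟨i - 1, by omega⟩, !b) := by
  rw [betaP_eq]
  simp only [Equiv.Perm.mul_apply]
  rw [s0B_apply_zero (by omega), cP_apply_zero (by omega) (by omega)]

lemma betaP_apply_step {i a : ℕ} (hin : i ≤ n) (ha1 : 1 ≤ a) (hai : a < i) (b : Bool) :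
    betaP n i (⟨a, by omega⟩, b) = (⟨a - 1, by omega⟩, b) := by
  rw [betaP_eq]
  simp only [Equiv.Perm.mul_apply]
  rw [s0B_apply_other _ _ (by simp; omega), cP_apply_step (by omega) (by omega) (by omega)]

lemma betaP_apply_other {i : ℕ} (a : Fin n) (b : Bool) (hai : i ≤ a.val) (h0 : 0 < i) :
    betaP n i (a, b) = (a, b) := by
  rw [betaP_eq]
  simp only [Equiv.Perm.mul_apply]
  rw [s0B_apply_other _ _ (by omega), cP_apply_other (by omega) _ _ (by omega)]

lemma betaP_pow_other {i : ℕ} (k : ℕ) (a : Fin n) (b : Bool) (hai : i ≤ a.val) (h0 : 0 < i) :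
    (betaP n i ^ k) (a, b) = (a, b) := by
  induction k with
  | zero => rfl
  | succ k ih =>
    rw [pow_succ']
    simp only [Equiv.Perm.mul_apply, ih]
    exact betaP_apply_other a b hai h0

lemma betaP_image_lt {i : ℕ} (hin : i ≤ n) (h0 : 0 < i) (a : Fin n) (b : Bool)
    (ha : a.val < i) : (betaP n i (a, b)).1.val < i := by
  obtain ⟨av, hav⟩ := a
  rcases Nat.eq_zero_or_pos av with h | h
  · subst h
    rw [betaP_apply_zero (by omega) hin]
    simp
    omega
  · rw [betaP_apply_step hin h ha]
    simp at ha ⊢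
    omega

lemma betaP_pow_false {i : ℕ} (hi1 : 1 ≤ i) (hin : i ≤ n) {k : ℕ} (hk : k < i) (b : Bool) :
    (betaP n i ^ k) (⟨i - 1, by omega⟩, b) = (⟨i - 1 - k, by omega⟩, b) := by
  induction k with
  | zero => rfl
  | succ k ih =>
    rw [pow_succ']
    simp only [Equiv.Perm.mul_apply]
    rw [ih (by omega)]
    rw [betaP_apply_step hin (by omega) (by omega)]
    simp only [Prod.mk.injEq, Fin.mk.injEq]
    exact ⟨by omega, trivial⟩

lemma betaP_pow_apply {i : ℕ} (hi1 : 1 ≤ i) (hin : i ≤ n) {k : ℕ} (hk : k < 2 * i)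
    (b : Bool) :
    (betaP n i ^ k) (⟨i - 1, by omega⟩, b) =
      if h : k < i then (⟨i - 1 - k, by omega⟩, b) else (⟨2 * i - 1 - k, by omega⟩, !b) := by
  split
  · next h => exact betaP_pow_false hi1 hin h b
  · next h =>
    push_neg at h
    have hsplit : betaP n i ^ k = betaP n i ^ (k - i) * betaP n i ^ i := by
      rw [← pow_add]; congr 1; omega
    rw [hsplit]
    simp only [Equiv.Perm.mul_apply]
    have hi' : i - 1 + 1 = i := by omega
    have hii : betaP n i ^ i = betaP n i * betaP n i ^ (i - 1) := by
      rw [← pow_succ', hi']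
    rw [hii]
    simp only [Equiv.Perm.mul_apply]
    rw [betaP_pow_false hi1 hin (by omega)]
    have h0 : (⟨i - 1 - (i - 1), by omega⟩ : Fin n) = ⟨0, by omega⟩ := by
      simp [Fin.ext_iff]
    rw [h0, betaP_apply_zero hi1 hin]
    rw [betaP_pow_false hi1 hin (by omega)]
    congr 1
    simp [Fin.ext_iff]
    omega

/-- Injectivity of `k ↦ β_i^k (i-1, false)` on `[0, 2i)`. -/
lemma betaP_pow_inj {i : ℕ} (hi1 : 1 ≤ i) (hin : i ≤ n) {k k' : ℕ} (hk : k < 2 * i)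
    (hk' : k' < 2 * i)
    (h : (betaP n i ^ k) (⟨i - 1, by omega⟩, false) =
      (betaP n i ^ k') (⟨i - 1, by omega⟩, false)) : k = k' := by
  rw [betaP_pow_apply hi1 hin hk, betaP_pow_apply hi1 hin hk'] at h
  split at h <;> split at h <;>
    simp [Prod.ext_iff, Fin.ext_iff] at h <;> omega

/-- Surjectivity: every letter of index `< i` is hit. -/
lemma betaP_pow_surj {i : ℕ} (hi1 : 1 ≤ i) (hin : i ≤ n) (a : Fin n) (b : Bool)
    (ha : a.val < i) :
    ∃ k < 2 * i, (betaP n i ^ k) (⟨i - 1, by omega⟩, false) = (a, b) := by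
  cases b
  · refine ⟨i - 1 - a.val, by omega, ?_⟩
    rw [betaP_pow_apply hi1 hin (by omega)]
    rw [dif_pos (by omega)]
    simp [Fin.ext_iff]
    omega
  · refine ⟨2 * i - 1 - a.val, by omega, ?_⟩
    rw [betaP_pow_apply hi1 hin (by omega)]
    rw [dif_neg (by omega)]
    simp [Fin.ext_iff]
    omega

lemma deltaP_n_mem_BSet : deltaP n n ∈ BSet n := by
  rw [deltaP_n_eq]; exact cP_mem_BSet _

lemma deltaP_n_pow_apply {k : ℕ} (hk : k < n) (b : Bool) :
    (deltaP n n ^ k) (⟨n - 1, by omega⟩, b) = (⟨n - 1 - k, by omega⟩, b) := by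
  rw [deltaP_n_eq]
  induction k with
  | zero => rfl
  | succ k ih =>
    rw [pow_succ']
    simp only [Equiv.Perm.mul_apply]
    rw [ih (by omega)]
    rw [cP_apply_step (by omega) (by omega) (by omega)]
    simp only [Prod.mk.injEq, Fin.mk.injEq]
    exact ⟨by omega, trivial⟩

lemma muP_comm_betaP {i : ℕ} (hi1 : 1 ≤ i) (hin : i ≤ n - 1) :
    muP n * betaP n i = betaP n i * muP n := by
  have hn : 0 < n := by omega
  apply Equiv.ext
  rintro ⟨a, b⟩
  simp only [Equiv.Perm.mul_apply]
  rcases Nat.lt_or_ge a.val i with h | h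
  · rw [muP_apply_other a b (by omega)]
    have h2 := betaP_image_lt (by omega) (by omega) a b h
    rcases hbeta : betaP n i (a, b) with ⟨c, d⟩
    rw [hbeta] at h2
    rw [muP_apply_other c d (by simp at h2 ⊢; omega)]
  · rw [betaP_apply_other a b h (by omega)]
    rcases eq_or_ne a.val (n - 1) with h2 | h2
    · have ha : a = ⟨n - 1, by omega⟩ := by ext; exact h2
      rw [ha, muP_apply_top hn]
      rw [betaP_apply_other _ _ (by simp; omega) (by omega)]
    · rw [muP_apply_other a b h2, betaP_apply_other a b h (by omega)]

lemma muP_comm_betaP_pow {i k : ℕ} (hi1 : 1 ≤ i) (hin : i ≤ n - 1) :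
    muP n * betaP n i ^ k = betaP n i ^ k * muP n :=
  (Commute.pow_right (muP_comm_betaP hi1 hin) k)


/-! ### The beta decomposition -/

/-- `bprod n m k = β_m^{k 0} β_{m-1}^{k 1} ⋯ β_1^{k (m-1)}`. -/
def bprod (n m : ℕ) (k : Fin m → ℕ) : Equiv.Perm (SF n) :=
  (List.ofFn fun j : Fin m => betaP n (m - j.val) ^ (k j)).prod

lemma bprod_zero (k : Fin 0 → ℕ) : bprod n 0 k = 1 := rfl

lemma bprod_succ (m : ℕ) (k : Fin (m + 1) → ℕ) :
    bprod n (m + 1) k = betaP n (m + 1) ^ (k 0) * bprod n m (k ∘ Fin.succ) := by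
  unfold bprod
  rw [List.ofFn_succ, List.prod_cons]
  congr 1
  apply congrArg
  apply congrArg
  funext j
  have h : m + 1 - (j.succ).val = m - j.val := by simp [Fin.val_succ]
  rw [h]
  rfl

lemma bprod_mem_BSet (m : ℕ) (k : Fin m → ℕ) : bprod n m k ∈ BSet n := by
  apply list_prod_mem_BSet
  intro x hx
  simp only [List.mem_ofFn] at hx
  obtain ⟨j, rfl⟩ := hx
  exact pow_mem_BSet (betaP_mem_BSet _) _

lemma bprod_fixes {m : ℕ} (hm : m ≤ n) (k : Fin m → ℕ) (a : Fin n) (b : Bool)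
    (ha : m ≤ a.val) : bprod n m k (a, b) = (a, b) := by
  induction m with
  | zero => rfl
  | succ m ih =>
    rw [bprod_succ]
    simp only [Equiv.Perm.mul_apply]
    rw [ih (by omega) _ (by omega)]
    exact betaP_pow_other _ a b ha (by omega)

lemma fix_true_of_fix_false {w : Equiv.Perm (SF n)} (hw : w ∈ BSet n) {a : Fin n}
    (h : w (a, false) = (a, false)) : w (a, true) = (a, true) := by
  have h2 := hw (a, false)
  simp only [negx, h] at h2
  exact h2

lemma Q_unique {m : ℕ} (hm : m ≤ n) (k k' : Fin m → ℕ)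
    (hk : ∀ j, k j < 2 * (m - j.val)) (hk' : ∀ j, k' j < 2 * (m - j.val))
    (h : bprod n m k = bprod n m k') : k = k' := by
  induction m with
  | zero => funext j; exact j.elim0
  | succ m ih =>
    have hpt := congrArg (fun w : Equiv.Perm (SF n) => w (⟨m, by omega⟩, false)) h
    simp only [bprod_succ, Equiv.Perm.mul_apply] at hpt
    rw [bprod_fixes (m := m) (by omega) _ _ _ (le_refl m),
      bprod_fixes (m := m) (by omega) _ _ _ (le_refl m)] at hpt
    have h0 : k 0 = k' 0 := by
      refine betaP_pow_inj (i := m + 1) (hi1 := by omega) (hin := hm)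
        (hk := by simpa using hk 0) (hk' := by simpa using hk' 0) ?_
      exact hpt
    have htail : bprod n m (k ∘ Fin.succ) = bprod n m (k' ∘ Fin.succ) := by
      have := h
      rw [bprod_succ, bprod_succ, h0] at this
      exact mul_left_cancel this
    have := ih (by omega) (k ∘ Fin.succ) (k' ∘ Fin.succ)
      (fun j => by have h1 := hk j.succ; simp only [Fin.val_succ] at h1 ⊢; simp only [Function.comp]; omega)
      (fun j => by have h1 := hk' j.succ; simp only [Fin.val_succ] at h1 ⊢; simp only [Function.comp]; omega)
      htail
    funext j
    induction j using Fin.cases with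
    | zero => exact h0
    | succ j => exact congrFun this j

lemma Q_exists {m : ℕ} (hm : m ≤ n) (π : Equiv.Perm (SF n)) (hπ : π ∈ BSet n)
    (hfix : ∀ (a : Fin n) (b : Bool), m ≤ a.val → π (a, b) = (a, b)) :
    ∃ k : Fin m → ℕ, (∀ j, k j < 2 * (m - j.val)) ∧ π = bprod n m k := by
  induction m generalizing π with
  | zero =>
    refine ⟨fun _ => 0, fun j => j.elim0, ?_⟩
    apply Equiv.ext
    rintro ⟨a, b⟩
    exact hfix a b (by omega)
  | succ m ih =>
    have hmn : m < n := by omega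
    set x := π ((⟨m, hmn⟩ : Fin n), false) with hx
    have hx1 : x.1.val < m + 1 := by
      by_contra hcon
      push_neg at hcon
      have h1 : π (x.1, x.2) = (x.1, x.2) := hfix x.1 x.2 (by omega)
      have h2 : π x = x := by rwa [Prod.mk.eta] at h1
      have h3 : ((⟨m, hmn⟩ : Fin n), false) = x := π.injective (by rw [h2, ← hx])
      have := congrArg (fun y : SF n => y.1.val) h3
      simp at this
      omega
    obtain ⟨k₀, hk₀, hk₀x⟩ := betaP_pow_surj (i := m + 1) (by omega) (by omega) x.1 x.2 hx1
    set π' := (betaP n (m + 1) ^ k₀)⁻¹ * π with hπ'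
    have hπ'mem : π' ∈ BSet n := mul_mem_BSet (inv_mem_BSet (pow_mem_BSet (betaP_mem_BSet _) _)) hπ
    have hfix' : ∀ (a : Fin n) (b : Bool), m ≤ a.val → π' (a, b) = (a, b) := by
      intro a b ha
      rcases Nat.lt_or_ge a.val (m + 1) with h | h
      · have ham : a = ⟨m, hmn⟩ := by ext; simp only [Fin.val_mk]; omega
        subst ham
        have hfalse : π' ((⟨m, hmn⟩ : Fin n), false) = ((⟨m, hmn⟩ : Fin n), false) := by
          rw [hπ']
          simp only [Equiv.Perm.mul_apply]
          rw [← hx, show x = (x.1, x.2) from rfl, ← hk₀x]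
          simp
        cases b
        · exact hfalse
        · exact fix_true_of_fix_false hπ'mem hfalse
      · rw [hπ']
        simp only [Equiv.Perm.mul_apply]
        rw [hfix a b (by omega)]
        have hfixa := betaP_pow_other (i := m + 1) k₀ a b (by omega) (by omega)
        conv_lhs => rw [← hfixa]
        simp
    obtain ⟨k', hk'b, hk'⟩ := ih (by omega) π' hπ'mem hfix'
    refine ⟨Fin.cases k₀ k', ?_, ?_⟩
    · intro j
      induction j using Fin.cases with
      | zero => simpa using hk₀
      | succ j =>
        simp only [Fin.cases_succ]
        have := hk'b j
        simp [Fin.val_succ]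
        omega
    · rw [bprod_succ]
      have hcomp : (Fin.cases k₀ k' : Fin (m + 1) → ℕ) ∘ Fin.succ = k' := by
        funext j; simp
      rw [hcomp]
      simp only [Fin.cases_zero]
      rw [← hk', hπ']
      simp [mul_assoc]


/-! ### The sign character -/

lemma fst_apply_eq {w : Equiv.Perm (SF n)} (hw : w ∈ BSet n) (i : Fin n) (b : Bool) :
    (w (i, b)).1 = (w (i, false)).1 := by
  cases b
  · rfl
  · have h := hw (i, false)
    simp only [negx] at h
    rw [show ((i, true) : SF n) = (i, !false) from rfl, h]

/-- The underlying permutation of `Fin n` induced by `w ∈ B_n`. -/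
def barE (w : Equiv.Perm (SF n)) (hw : w ∈ BSet n) : Equiv.Perm (Fin n) where
  toFun i := (w (i, false)).1
  invFun i := (w⁻¹ (i, false)).1
  left_inv := by
    intro i
    show (w⁻¹ ((w (i, false)).1, false)).1 = i
    rw [← fst_apply_eq (inv_mem_BSet hw) (w (i, false)).1 (w (i, false)).2,
      Prod.mk.eta, ← Equiv.Perm.mul_apply, inv_mul_cancel, Equiv.Perm.one_apply]
  right_inv := by
    intro i
    show (w ((w⁻¹ (i, false)).1, false)).1 = i
    rw [← fst_apply_eq hw (w⁻¹ (i, false)).1 (w⁻¹ (i, false)).2,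
      Prod.mk.eta, ← Equiv.Perm.mul_apply, mul_inv_cancel, Equiv.Perm.one_apply]

lemma barE_apply {w : Equiv.Perm (SF n)} (hw : w ∈ BSet n) (i : Fin n) :
    barE w hw i = (w (i, false)).1 := rfl

/-- The character `ε` of `B_n` taking value `-1` on every Coxeter generator. -/
noncomputable def epsP (w : Equiv.Perm (SF n)) : ℤˣ :=
  if hw : w ∈ BSet n then Equiv.Perm.sign (barE w hw) * Equiv.Perm.sign w else 1

lemma epsP_mul {u w : Equiv.Perm (SF n)} (hu : u ∈ BSet n) (hw : w ∈ BSet n) :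
    epsP (u * w) = epsP u * epsP w := by
  unfold epsP
  rw [dif_pos hu, dif_pos hw, dif_pos (mul_mem_BSet hu hw)]
  have hbar : barE (u * w) (mul_mem_BSet hu hw) = barE u hu * barE w hw := by
    apply Equiv.ext
    intro i
    simp only [barE_apply, Equiv.Perm.mul_apply]
    rw [← fst_apply_eq hu ((w (i, false)).1) ((w (i, false)).2)]
  rw [hbar, map_mul, map_mul]
  rw [mul_mul_mul_comm]

lemma epsP_one : epsP (1 : Equiv.Perm (SF n)) = 1 := by
  unfold epsP
  rw [dif_pos one_mem_BSet]
  have : barE (1 : Equiv.Perm (SF n)) one_mem_BSet = 1 := by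
    apply Equiv.ext; intro i; rfl
  rw [this]
  simp

lemma epsP_pow {w : Equiv.Perm (SF n)} (hw : w ∈ BSet n) (k : ℕ) :
    epsP (w ^ k) = epsP w ^ k := by
  induction k with
  | zero => simpa using epsP_one
  | succ k ih => rw [pow_succ, pow_succ, epsP_mul (pow_mem_BSet hw k) hw, ih]

lemma epsP_inv {w : Equiv.Perm (SF n)} (hw : w ∈ BSet n) : epsP w⁻¹ = epsP w := by
  have h := epsP_mul (inv_mem_BSet hw) hw
  rw [inv_mul_cancel, epsP_one] at h
  have h2 : epsP w⁻¹ = (epsP w)⁻¹ := by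
    rw [eq_inv_iff_mul_eq_one, ← h]
  rw [h2]
  generalize epsP w = u
  rcases Int.units_eq_one_or u with rfl | rfl <;> decide

lemma epsP_sadj {j : ℕ} (h : j + 1 < n) : epsP (sadj n j) = -1 := by
  unfold epsP
  rw [dif_pos (sadj_mem_BSet j)]
  have hbar : barE (sadj n j) (sadj_mem_BSet j) =
      Equiv.swap (⟨j, by omega⟩ : Fin n) ⟨j + 1, h⟩ := by
    apply Equiv.ext
    intro i
    rw [barE_apply]
    rcases eq_or_ne i.val j with h1 | h1
    · have hieq : i = ⟨j, by omega⟩ := by ext; simp only [Fin.val_mk]; omega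
      rw [hieq, sadj_apply_lo h, Equiv.swap_apply_left]
    · rcases eq_or_ne i.val (j + 1) with h2 | h2
      · have hieq : i = ⟨j + 1, h⟩ := by ext; simp only [Fin.val_mk]; omega
        rw [hieq, sadj_apply_hi h, Equiv.swap_apply_right]
      · rw [sadj_apply_other i false h1 h2,
          Equiv.swap_apply_of_ne_of_ne (by simp [Fin.ext_iff] <;> omega)
            (by simp [Fin.ext_iff] <;> omega)]
  have hsign : Equiv.Perm.sign (sadj n j) = 1 := by
    unfold sadj
    rw [dif_pos h, map_mul,
      Equiv.Perm.sign_swap (by simp [Prod.ext_iff, Fin.ext_iff] <;> omega),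
      Equiv.Perm.sign_swap (by simp [Prod.ext_iff, Fin.ext_iff] <;> omega)]
    decide
  rw [hbar, hsign, Equiv.Perm.sign_swap (by simp [Fin.ext_iff] <;> omega)]
  simp

lemma epsP_s0B (hn : 0 < n) : epsP (s0B n) = -1 := by
  unfold epsP
  rw [dif_pos s0B_mem_BSet]
  have hbar : barE (s0B n) s0B_mem_BSet = 1 := by
    apply Equiv.ext
    intro i
    rw [barE_apply]
    rcases eq_or_ne i.val 0 with h1 | h1
    · have hieq : i = ⟨0, hn⟩ := by ext; simp only [Fin.val_mk]; omega
      rw [hieq, s0B_apply_zero hn]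
      rfl
    · rw [s0B_apply_other i false h1]
      rfl
  have hsign : Equiv.Perm.sign (s0B n) = -1 := by
    unfold s0B
    rw [dif_pos hn, Equiv.Perm.sign_swap (by simp [Prod.ext_iff])]
  rw [hbar, hsign]
  simp

lemma epsP_muP (hn : 0 < n) : epsP (muP n) = -1 := by
  unfold epsP
  rw [dif_pos muP_mem_BSet]
  have hbar : barE (muP n) muP_mem_BSet = 1 := by
    apply Equiv.ext
    intro i
    rw [barE_apply]
    rcases eq_or_ne i.val (n - 1) with h1 | h1
    · have hieq : i = ⟨n - 1, by omega⟩ := by ext; simp only [Fin.val_mk]; omega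
      rw [hieq, muP_apply_top hn]
      rfl
    · rw [muP_apply_other i false h1]
      rfl
  have hsign : Equiv.Perm.sign (muP n) = -1 := by
    unfold muP
    rw [dif_pos hn, Equiv.Perm.sign_swap (by simp [Prod.ext_iff])]
  rw [hbar, hsign]
  simp

lemma SgenB_subset_BSet {x : Equiv.Perm (SF n)} (hx : x ∈ SgenB n) : x ∈ BSet n := by
  rcases hx with rfl | ⟨j, hj, rfl⟩
  · exact s0B_mem_BSet
  · exact sadj_mem_BSet j

lemma epsP_gen (hn : 0 < n) {x : Equiv.Perm (SF n)} (hx : x ∈ SgenB n) : epsP x = -1 := by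
  rcases hx with rfl | ⟨j, hj, rfl⟩
  · exact epsP_s0B hn
  · exact epsP_sadj hj

lemma epsP_word (hn : 0 < n) (l : List (Equiv.Perm (SF n))) (h : ∀ x ∈ l, x ∈ SgenB n) :
    epsP l.prod = (-1) ^ l.length := by
  induction l with
  | nil => simpa using epsP_one
  | cons a l ih =>
    rw [List.prod_cons, epsP_mul (SgenB_subset_BSet (h a (by simp)))
      (list_prod_mem_BSet fun x hx => SgenB_subset_BSet (h x (by simp [hx])))]
    rw [epsP_gen hn (h a (by simp)), ih fun x hx => h x (by simp [hx])]
    rw [List.length_cons, pow_succ, mul_comm]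

/-- `w` can be written as a word in the generators. -/
def HasWordB (w : Equiv.Perm (SF n)) : Prop :=
  ∃ l : List (Equiv.Perm (SF n)), (∀ x ∈ l, x ∈ SgenB n) ∧ l.prod = w

lemma HasWordB.mul {u w : Equiv.Perm (SF n)} (hu : HasWordB u) (hw : HasWordB w) :
    HasWordB (u * w) := by
  obtain ⟨l1, h1, rfl⟩ := hu
  obtain ⟨l2, h2, rfl⟩ := hw
  refine ⟨l1 ++ l2, ?_, by rw [List.prod_append]⟩
  intro x hx
  rcases List.mem_append.1 hx with h | h
  · exact h1 x h
  · exact h2 x h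

lemma HasWordB.one : HasWordB (1 : Equiv.Perm (SF n)) := ⟨[], by simp, rfl⟩

lemma HasWordB.pow {w : Equiv.Perm (SF n)} (hw : HasWordB w) (k : ℕ) : HasWordB (w ^ k) := by
  induction k with
  | zero => simpa using HasWordB.one
  | succ k ih => rw [pow_succ]; exact ih.mul hw

lemma hasWordB_cP {i : ℕ} (hi : i + 1 ≤ n) : HasWordB (cP n i) := by
  refine ⟨(List.range i).reverse.map (sadj n), ?_, rfl⟩
  intro x hx
  simp only [List.mem_map, List.mem_reverse, List.mem_range] at hx
  obtain ⟨j, hj, rfl⟩ := hx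
  exact Or.inr ⟨j, by omega, rfl⟩

lemma hasWordB_betaP {i : ℕ} (hi : i ≤ n) (h0 : 0 < i) : HasWordB (betaP n i) := by
  rw [betaP_eq]
  exact (hasWordB_cP (by omega)).mul ⟨[s0B n], by simp [SgenB], rfl⟩

lemma hasWordB_bprod {m : ℕ} (hm : m ≤ n) (k : Fin m → ℕ) : HasWordB (bprod n m k) := by
  induction m with
  | zero => exact HasWordB.one
  | succ m ih =>
    rw [bprod_succ]
    exact ((hasWordB_betaP (by omega) (by omega)).pow _).mul (ih (by omega) _)

/-- Generation: every element of `B_n` is a word in the Coxeter generators. -/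
lemma hasWordB_of_mem_BSet {w : Equiv.Perm (SF n)} (hw : w ∈ BSet n) : HasWordB w := by
  obtain ⟨k, _, rfl⟩ := Q_exists (le_refl n) w hw (fun a b ha => absurd a.isLt (by omega))
  exact hasWordB_bprod (le_refl n) k

lemma mem_BplusSet_iff (hn : 0 < n) {w : Equiv.Perm (SF n)} (hw : w ∈ BSet n) :
    w ∈ BplusSet n ↔ epsP w = 1 := by
  obtain ⟨l, hl, hlp⟩ := hasWordB_of_mem_BSet hw
  have hne : {L | ∃ l' : List (Equiv.Perm (SF n)),
      (∀ x ∈ l', x ∈ SgenB n) ∧ l'.length = L ∧ l'.prod = w}.Nonempty :=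
    ⟨l.length, l, hl, rfl, hlp⟩
  obtain ⟨l₀, hl₀, hlen₀, hprod₀⟩ := Nat.sInf_mem hne
  have h1 : epsP w = (-1) ^ l₀.length := by
    rw [← hprod₀]
    exact epsP_word hn l₀ hl₀
  have heps : epsP w = (-1) ^ wordLength (SgenB n) w := by
    rw [h1, hlen₀]
    rfl
  constructor
  · rintro ⟨-, heven⟩
    rw [heps, Even.neg_one_pow heven]
  · intro h1
    refine ⟨hw, ?_⟩
    rw [h1] at heps
    by_contra hodd
    rw [Nat.not_even_iff_odd] at hodd
    rw [Odd.neg_one_pow hodd] at heps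
    exact absurd heps (by decide)


/-! ### epsilon values -/

lemma epsP_cP {i : ℕ} (hi : i + 1 ≤ n) : epsP (cP n i) = (-1) ^ i := by
  induction i with
  | zero => simpa [cP_zero] using epsP_one
  | succ i ih =>
    rw [cP_succ, epsP_mul (sadj_mem_BSet i) (cP_mem_BSet i), epsP_sadj (by omega),
      ih (by omega), pow_succ, mul_comm]

lemma epsP_betaP {i : ℕ} (hi1 : 1 ≤ i) (hin : i ≤ n) : epsP (betaP n i) = (-1) ^ i := by
  rw [betaP_eq, epsP_mul (cP_mem_BSet _) s0B_mem_BSet, epsP_cP (by omega),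
    epsP_s0B (by omega), ← pow_succ]
  congr 1
  omega

lemma epsP_deltaP_top (hn : 0 < n) : epsP (deltaP n n) = (-1) ^ (n - 1) := by
  rw [deltaP_n_eq, epsP_cP (by omega)]

lemma epsP_bprod {m : ℕ} (hm : m ≤ n) (k : Fin m → ℕ) :
    epsP (bprod n m k) = (-1) ^ (∑ j : Fin m, (m - j.val) * k j) := by
  induction m with
  | zero => simpa [bprod_zero] using epsP_one
  | succ m ih =>
    rw [bprod_succ, epsP_mul (pow_mem_BSet (betaP_mem_BSet _) _) (bprod_mem_BSet _ _),
      epsP_pow (betaP_mem_BSet _), epsP_betaP (by omega) (by omega), ih (by omega),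
      ← pow_mul, ← pow_add, Fin.sum_univ_succ]
    congr 1
    simp only [Fin.val_zero, Nat.sub_zero, Function.comp, Fin.val_succ]
    congr 1
    apply Finset.sum_congr rfl
    intro j _
    congr 1
    omega

/-! ### mu power parity -/

lemma muP_pow_parity (t : ℕ) : muP n ^ t = if Even t then 1 else muP n := by
  induction t with
  | zero => simp
  | succ t ih =>
    rw [pow_succ, ih]
    rcases Nat.even_or_odd t with h | h
    · rw [if_pos h, if_neg, one_mul]
      rw [Nat.even_add_one]
      exact not_not_intro h
    · rw [if_neg (Nat.not_even_iff_odd.2 h), if_pos, muP_mul_self]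
      rw [Nat.even_add_one]
      exact Nat.not_even_iff_odd.2 h

lemma neg_one_pow_congr_mod {a b : ℕ} (h : a % 2 = b % 2) : ((-1 : ℤˣ)) ^ a = (-1) ^ b := by
  rcases Nat.even_or_odd a with ha | ha
  · have hb : Even b := by rw [Nat.even_iff] at ha ⊢; omega
    rw [Even.neg_one_pow ha, Even.neg_one_pow hb]
  · have hb : Odd b := by rw [Nat.odd_iff] at ha ⊢; omega
    rw [Odd.neg_one_pow ha, Odd.neg_one_pow hb]

lemma muP_pow_congr {a b : ℕ} (h : ((-1 : ℤˣ)) ^ a = (-1) ^ b) : muP n ^ a = muP n ^ b := by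
  have hiff : Even a ↔ Even b := by
    constructor
    · intro ha
      by_contra hb
      rw [Even.neg_one_pow ha, Odd.neg_one_pow (Nat.not_even_iff_odd.1 hb)] at h
      exact absurd h (by decide)
    · intro hb
      by_contra ha
      rw [Even.neg_one_pow hb, Odd.neg_one_pow (Nat.not_even_iff_odd.1 ha)] at h
      exact absurd h.symm (by decide)
  rw [muP_pow_parity, muP_pow_parity]
  rcases Nat.even_or_odd a with ha | ha
  · rw [if_pos ha, if_pos (hiff.1 ha)]
  · rw [if_neg (Nat.not_even_iff_odd.2 ha),
      if_neg fun hb => Nat.not_even_iff_odd.2 ha (hiff.2 hb)]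

/-! ### Gamma -/

lemma psiP_mem_BSet {w : Equiv.Perm (SF n)} (hw : w ∈ BSet n) : psiP n w ∈ BSet n := by
  unfold psiP
  split
  · exact hw
  · exact mul_mem_BSet hw muP_mem_BSet

lemma hasWordB_deltaP_top (hn : 0 < n) : HasWordB (deltaP n n) := by
  rw [deltaP_n_eq]
  exact hasWordB_cP (by omega)

lemma epsP_Gamma (hn : 0 < n) : epsP (psiP n (deltaP n n)) = 1 := by
  unfold psiP
  split
  · next h => exact (mem_BplusSet_iff hn deltaP_n_mem_BSet).1 h
  · next h =>
    rw [epsP_mul deltaP_n_mem_BSet muP_mem_BSet, epsP_muP hn]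
    have hne : epsP (deltaP n n) ≠ 1 := fun hc =>
      h ((mem_BplusSet_iff hn deltaP_n_mem_BSet).2 hc)
    rcases Int.units_eq_one_or (epsP (deltaP n n)) with hc | hc
    · exact absurd hc hne
    · rw [hc]; decide

lemma Gamma_eq_of_odd (hodd : Odd n) : psiP n (deltaP n n) = deltaP n n := by
  have hn : 0 < n := by rcases hodd with ⟨m, hm⟩; omega
  unfold psiP
  rw [if_pos]
  rw [mem_BplusSet_iff hn deltaP_n_mem_BSet, epsP_deltaP_top hn]
  exact Even.neg_one_pow (by rcases hodd with ⟨m, hm⟩; exact ⟨m, by omega⟩)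

lemma Gamma_eq_of_even (heven : Even n) (hn : 0 < n) :
    psiP n (deltaP n n) = deltaP n n * muP n := by
  unfold psiP
  rw [if_neg]
  rw [mem_BplusSet_iff hn deltaP_n_mem_BSet, epsP_deltaP_top hn]
  rw [Odd.neg_one_pow]
  · decide
  · rcases heven with ⟨m, hm⟩
    exact ⟨m - 1, by omega⟩

lemma dmu_pow_apply {k : ℕ} (hk1 : 1 ≤ k) (hkn : k < n) (b : Bool) :
    ((deltaP n n * muP n) ^ k) ((⟨n - 1, by omega⟩ : Fin n), b) =
      (⟨n - 1 - k, by omega⟩, !b) := by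
  induction k with
  | zero => omega
  | succ k ih =>
    rcases Nat.eq_zero_or_pos k with rfl | hk
    · rw [pow_one]
      simp only [Equiv.Perm.mul_apply]
      rw [muP_apply_top (by omega), deltaP_n_eq,
        cP_apply_step (by omega) (by omega) (by omega) (by omega)]
    · rw [pow_succ']
      simp only [Equiv.Perm.mul_apply]
      rw [ih (by omega) (by omega)]
      rw [muP_apply_other _ _ (by simp; omega), deltaP_n_eq,
        cP_apply_step (by omega) (by omega) (by omega) (by omega)]
      simp only [Prod.mk.injEq, Fin.mk.injEq]
      exact ⟨by omega, trivial⟩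

lemma Gamma_pow_apply (hn : 0 < n) {k : ℕ} (hk : k < n) (b : Bool) :
    (psiP n (deltaP n n) ^ k) ((⟨n - 1, by omega⟩ : Fin n), b) =
      (⟨n - 1 - k, by omega⟩, xor (decide (Even n) && decide (0 < k)) b) := by
  rcases Nat.even_or_odd n with he | ho
  · rw [Gamma_eq_of_even he hn]
    rcases Nat.eq_zero_or_pos k with rfl | hk1
    · simp
    · rw [dmu_pow_apply hk1 hk b]
      simp [he, hk1]
  · rw [Gamma_eq_of_odd ho, deltaP_n_pow_apply hk b]
    simp [Nat.even_iff, Nat.odd_iff.1 ho]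

lemma Gamma_mu_apply (hn : 0 < n) {k : ℕ} (hk : k < n) (t : ℕ) :
    (psiP n (deltaP n n) ^ k * muP n ^ t) ((⟨n - 1, by omega⟩ : Fin n), false) =
      (⟨n - 1 - k, by omega⟩,
        xor (decide (Even n) && decide (0 < k)) (decide (Odd t))) := by
  simp only [Equiv.Perm.mul_apply]
  rw [muP_pow_parity]
  rcases Nat.even_or_odd t with ht | ht
  · rw [if_pos ht]
    have : (decide (Odd t)) = false := by simp [Nat.not_odd_iff_even.2 ht]
    rw [this]
    simpa using Gamma_pow_apply hn hk false
  · rw [if_neg (Nat.not_even_iff_odd.2 ht)]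
    have : (decide (Odd t)) = true := by simpa using ht
    rw [this, muP_apply_top hn]
    simpa using Gamma_pow_apply hn hk true

lemma Gamma_mu_inj (hn : 0 < n) {k k' t t' : ℕ} (hk : k < n) (hk' : k' < n)
    (h : (psiP n (deltaP n n) ^ k * muP n ^ t) ((⟨n - 1, by omega⟩ : Fin n), false) =
      (psiP n (deltaP n n) ^ k' * muP n ^ t') ((⟨n - 1, by omega⟩ : Fin n), false)) :
    k = k' ∧ (Odd t ↔ Odd t') := by
  rw [Gamma_mu_apply hn hk t, Gamma_mu_apply hn hk' t'] at h
  simp only [Prod.mk.injEq, Fin.mk.injEq] at h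
  obtain ⟨h1, h2⟩ := h
  have hkk : k = k' := by omega
  subst hkk
  refine ⟨rfl, ?_⟩
  rcases Bool.eq_false_or_eq_true (decide (Even n) && decide (0 < k)) with hf | hf <;>
    rw [hf] at h2 <;> simp at h2 <;> simp [h2]

lemma Gamma_mu_surj (hn : 0 < n) (x : SF n) :
    ∃ k < n, ∃ t < 2,
      (psiP n (deltaP n n) ^ k * muP n ^ t) ((⟨n - 1, by omega⟩ : Fin n), false) = x := by
  rcases x with ⟨a, s⟩
  refine ⟨n - 1 - a.val, by omega, ?_⟩
  set flag := xor (decide (Even n) && decide (0 < n - 1 - a.val)) s with hflag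
  refine ⟨cond flag 1 0, by cases flag <;> simp, ?_⟩
  rw [Gamma_mu_apply hn (by omega)]
  have hb : decide (Odd (cond flag 1 0)) = flag := by
    cases flag <;> simp <;> decide
  rw [hb, hflag]
  simp only [Prod.mk.injEq]
  constructor
  · ext
    simp only [Fin.val_mk]
    omega
  · cases s <;> cases (decide (Even n) && decide (0 < n - 1 - a.val)) <;> rfl


/-! ### psi of delta for small indices -/

lemma neg_one_pow_eq_one_iff' {m : ℕ} : ((-1 : ℤˣ)) ^ m = 1 ↔ Even m :=
  neg_one_pow_eq_one_iff_even (by decide)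

lemma psiP_deltaP_lt {i : ℕ} (hi1 : 1 ≤ i) (hin : i ≤ n - 1) :
    psiP n (deltaP n i) = betaP n i * muP n ^ (if Odd i then 1 else 0) := by
  have hn : 0 < n := by omega
  have hmem : betaP n i * muP n ∈ BSet n := mul_mem_BSet (betaP_mem_BSet i) muP_mem_BSet
  have heps : epsP (betaP n i * muP n) = (-1) ^ (i + 1) := by
    rw [epsP_mul (betaP_mem_BSet i) muP_mem_BSet, epsP_betaP hi1 (by omega), epsP_muP hn,
      pow_succ]
  have hd : deltaP n i = betaP n i * muP n := by unfold deltaP; rw [if_neg (by omega)]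
  rw [hd]
  unfold psiP
  split
  · next h =>
    have h1 := (mem_BplusSet_iff hn hmem).1 h
    rw [heps, neg_one_pow_eq_one_iff'] at h1
    have hodd : Odd i := by
      rcases Nat.even_or_odd i with he | ho
      · exfalso
        rw [Nat.even_iff] at he
        rw [Nat.even_iff] at h1
        omega
      · exact ho
    rw [if_pos hodd, pow_one]
  · next h =>
    have h1 : ¬Even (i + 1) := by
      intro he
      exact h ((mem_BplusSet_iff hn hmem).2 (by rw [heps]; exact neg_one_pow_eq_one_iff'.2 he))
    have heven : ¬Odd i := by
      intro ho
      apply h1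
      rcases ho with ⟨m, hm⟩
      exact ⟨m + 1, by omega⟩
    rw [if_neg heven, pow_zero, mul_one, mul_assoc, muP_mul_self, mul_one]

/-! ### pulling the v factors out of a product -/

lemma prod_pow_mul_v {G : Type*} [Group G] (v : G) :
    ∀ (m : ℕ) (B : Fin m → G) (e κ : Fin m → ℕ),
      (∀ j, Commute v (B j)) →
      (List.ofFn fun j => (B j * v ^ e j) ^ κ j).prod =
        (List.ofFn fun j => B j ^ κ j).prod * v ^ (∑ j, e j * κ j) := by
  intro m
  induction m with
  | zero => intro B e κ _; simp
  | succ m ih =>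
    intro B e κ hc
    rw [List.ofFn_succ, List.ofFn_succ, List.prod_cons, List.prod_cons,
      ih (fun j => B j.succ) (fun j => e j.succ) (fun j => κ j.succ) (fun j => hc j.succ)]
    have hcomm0 : Commute (B 0) (v ^ e 0) := ((hc 0).symm.pow_right _)
    rw [hcomm0.mul_pow, ← pow_mul]
    have hvP : Commute (v ^ (e 0 * κ 0))
        ((List.ofFn fun j : Fin m => B j.succ ^ κ j.succ).prod) := by
      apply Commute.list_prod_right
      intro x hx
      simp only [List.mem_ofFn] at hx
      obtain ⟨j, rfl⟩ := hx
      exact ((hc j.succ).pow_pow _ _)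
    rw [Fin.sum_univ_succ, pow_add]
    simp only [mul_assoc]
    congr 1
    rw [← mul_assoc, hvP.eq, mul_assoc]

lemma muP_comm_bprod {m : ℕ} (hm : m ≤ n - 1) (κ : Fin m → ℕ) :
    Commute (muP n) (bprod n m κ) := by
  apply Commute.list_prod_right
  intro x hx
  simp only [List.mem_ofFn] at hx
  obtain ⟨j, rfl⟩ := hx
  have h1 : 1 ≤ m - j.val := by omega
  have h2 : m - j.val ≤ n - 1 := by omega
  have hc : Commute (muP n) (betaP n (m - j.val)) := muP_comm_betaP h1 h2
  exact hc.pow_right _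

lemma muP_pow_congr' {a b : ℕ} (h : Odd a ↔ Odd b) : muP n ^ a = muP n ^ b := by
  apply muP_pow_congr
  apply neg_one_pow_congr_mod
  rw [Nat.odd_iff, Nat.odd_iff] at h
  omega

lemma parity_if_mul (i c : ℕ) : ((if Odd i then 1 else 0) * c) % 2 = (i * c) % 2 := by
  rcases Nat.even_or_odd i with he | ho
  · rw [if_neg (by rwa [Nat.not_odd_iff_even]), zero_mul, Nat.mul_mod i c,
      Nat.even_iff.1 he, zero_mul]
  · rw [if_pos ho, one_mul, Nat.mul_mod i c, Nat.odd_iff.1 ho, one_mul]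
    omega

/-- The decomposition of a `cSeq`-power-product into `Γ`, `β`-part and `μ`-part. -/
lemma prodPow_cSeq (N : ℕ) (K : Fin (N + 1) → ℕ) :
    (List.ofFn fun j : Fin (N + 1) => cSeq (N + 1) j ^ K j).prod =
      psiP (N + 1) (deltaP (N + 1) (N + 1)) ^ K 0 *
        (bprod (N + 1) N (fun j' => K j'.succ) *
          muP (N + 1) ^ (∑ j' : Fin N, (if Odd (N - j'.val) then 1 else 0) * K j'.succ)) := by
  rw [List.ofFn_succ, List.prod_cons]
  have hhead : cSeq (N + 1) 0 = psiP (N + 1) (deltaP (N + 1) (N + 1)) := rfl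
  have htail : (fun j' : Fin N => cSeq (N + 1) j'.succ ^ K j'.succ) =
      fun j' : Fin N => (betaP (N + 1) (N - j'.val) *
        muP (N + 1) ^ (if Odd (N - j'.val) then 1 else 0)) ^ K j'.succ := by
    funext j'
    congr 1
    show psiP (N + 1) (deltaP (N + 1) (N + 1 - j'.succ.val)) = _
    have hidx : N + 1 - j'.succ.val = N - j'.val := by simp [Fin.val_succ]
    rw [hidx]
    exact psiP_deltaP_lt (by omega) (by simp)
  have hcomm : ∀ j' : Fin N, Commute (muP (N + 1)) (betaP (N + 1) (N - j'.val)) :=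
    fun j' => muP_comm_betaP (by omega) (by simp)
  rw [hhead, htail, prod_pow_mul_v (muP (N + 1)) N
    (fun j' => betaP (N + 1) (N - j'.val)) _ (fun j' => K j'.succ) hcomm]
  rfl


lemma eval_decomp (N : ℕ) (g : Equiv.Perm (SF (N + 1))) (κκ : Fin N → ℕ) (TT : ℕ) :
    (g * (bprod (N + 1) N κκ * muP (N + 1) ^ TT))
        ((⟨N + 1 - 1, by omega⟩ : Fin (N + 1)), false) =
      (g * muP (N + 1) ^ TT) ((⟨N + 1 - 1, by omega⟩ : Fin (N + 1)), false) := by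
  simp only [Equiv.Perm.mul_apply]
  congr 1
  rw [muP_pow_parity]
  split
  · simp only [Equiv.Perm.one_apply]
    exact bprod_fixes (by omega) κκ _ false (by simp only [Fin.val_mk]; omega)
  · rw [muP_apply_top (by omega)]
    exact bprod_fixes (by omega) κκ _ true (by simp only [Fin.val_mk]; omega)

theorem gamma_uniqueProd_Bplus_aux (n : ℕ) :
    ∀ π ∈ BplusSet n,
      ∃! k : (j : Fin n) → Fin (mD n j), π = prodPow (cSeq n) fun j => (k j : ℕ) := by
  intro π hπ
  cases n with
  | zero =>
    refine ⟨fun j => j.elim0, ?_, ?_⟩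
    · have hone : π = 1 := by
        apply Equiv.ext
        intro x
        exact x.1.elim0
      rw [hone]
      rfl
    · intro y _
      funext j
      exact j.elim0
  | succ N =>
    have hn : 0 < N + 1 := N.succ_pos
    have hπB : π ∈ BSet (N + 1) := hπ.1
    have hπeps : epsP π = 1 := (mem_BplusSet_iff hn hπB).1 hπ
    have hΓB : psiP (N + 1) (deltaP (N + 1) (N + 1)) ∈ BSet (N + 1) :=
      psiP_mem_BSet deltaP_n_mem_BSet
    obtain ⟨k₀, hk₀, t, ht, hval⟩ :=
      Gamma_mu_surj hn (π ((⟨N + 1 - 1, by omega⟩ : Fin (N + 1)), false))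
    set π' := (psiP (N + 1) (deltaP (N + 1) (N + 1)) ^ k₀ * muP (N + 1) ^ t)⁻¹ * π
      with hπ'def
    have hπmul : π = (psiP (N + 1) (deltaP (N + 1) (N + 1)) ^ k₀ * muP (N + 1) ^ t) * π' := by
      rw [hπ'def, mul_inv_cancel_left]
    have hΓμB : psiP (N + 1) (deltaP (N + 1) (N + 1)) ^ k₀ * muP (N + 1) ^ t ∈
        BSet (N + 1) :=
      mul_mem_BSet (pow_mem_BSet hΓB _) (pow_mem_BSet muP_mem_BSet _)
    have hπ'B : π' ∈ BSet (N + 1) := mul_mem_BSet (inv_mem_BSet hΓμB) hπB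
    have hfix' : ∀ (a : Fin (N + 1)) (b : Bool), N ≤ a.val → π' (a, b) = (a, b) := by
      intro a b ha
      have haN : a = ⟨N + 1 - 1, by omega⟩ := by
        ext
        simp only [Fin.val_mk]
        omega
      have hfalse : π' ((⟨N + 1 - 1, by omega⟩ : Fin (N + 1)), false) =
          ((⟨N + 1 - 1, by omega⟩ : Fin (N + 1)), false) := by
        rw [hπ'def]
        simp only [Equiv.Perm.mul_apply]
        rw [← hval]
        simp
      rw [haN]
      cases b
      · exact hfalse
      · exact fix_true_of_fix_false hπ'B hfalse
    obtain ⟨κ, hκb, hκ⟩ := Q_exists (n := N + 1) (m := N) (by omega) π' hπ'B hfix'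
    have hepsπ' : epsP π' = (-1) ^ t := by
      rw [hπ'def, epsP_mul (inv_mem_BSet hΓμB) hπB, hπeps, mul_one, epsP_inv hΓμB,
        epsP_mul (pow_mem_BSet hΓB _) (pow_mem_BSet muP_mem_BSet _),
        epsP_pow hΓB, epsP_Gamma hn, one_pow, one_mul, epsP_pow muP_mem_BSet, epsP_muP hn]
    have hepsS : epsP π' = (-1) ^ (∑ j : Fin N, (N - j.val) * κ j) := by
      rw [hκ]
      exact epsP_bprod (by omega) κ
    have hμtT : muP (N + 1) ^ t =
        muP (N + 1) ^ (∑ j' : Fin N, (if Odd (N - j'.val) then 1 else 0) * κ j') := by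
      apply muP_pow_congr
      have h1 : ((-1 : ℤˣ)) ^ t = (-1) ^ (∑ j : Fin N, (N - j.val) * κ j) := by
        rw [← hepsπ', hepsS]
      refine h1.trans (neg_one_pow_congr_mod ?_)
      rw [Finset.sum_nat_mod]
      conv_rhs => rw [Finset.sum_nat_mod]
      congr 1
      apply Finset.sum_congr rfl
      intro j _
      exact (parity_if_mul (N - j.val) (κ j)).symm
    have hb0 : k₀ < mD (N + 1) 0 := by simpa [mD] using hk₀
    have hbs : ∀ j' : Fin N, κ j' < mD (N + 1) j'.succ := by
      intro j'
      have := hκb j'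
      simp only [mD, Fin.val_succ]
      rw [if_neg (by omega)]
      omega
    refine ⟨Fin.cases ⟨k₀, hb0⟩ (fun j' => ⟨κ j', hbs j'⟩), ?_, ?_⟩
    · show π = prodPow (cSeq (N + 1)) _
      unfold prodPow
      rw [prodPow_cSeq N _]
      have hK0 : ((Fin.cases (motive := fun j => Fin (mD (N + 1) j)) ⟨k₀, hb0⟩
          (fun j' => ⟨κ j', hbs j'⟩) 0 : Fin _) : ℕ) = k₀ := by simp
      have hKs : ∀ j' : Fin N, ((Fin.cases (motive := fun j => Fin (mD (N + 1) j)) ⟨k₀, hb0⟩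
          (fun j' => ⟨κ j', hbs j'⟩) j'.succ : Fin _) : ℕ) = κ j' := by
        intro j'
        simp
      simp only [hK0, hKs]
      rw [← hμtT, hπmul, hκ, mul_assoc]
      congr 1
      exact ((muP_comm_bprod (by omega) κ).pow_left t).eq
    · intro y hy
      have hy' : π = psiP (N + 1) (deltaP (N + 1) (N + 1)) ^ ((y 0 : ℕ)) *
          (bprod (N + 1) N (fun j' => (y j'.succ : ℕ)) *
            muP (N + 1) ^ (∑ j' : Fin N,
              (if Odd (N - j'.val) then 1 else 0) * (y j'.succ : ℕ))) := by
        rw [hy]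
        exact prodPow_cSeq N _
      have hy0lt : ((y 0 : ℕ)) < N + 1 := by
        have := (y 0).isLt
        simpa [mD] using this
      have hvalY : (psiP (N + 1) (deltaP (N + 1) (N + 1)) ^ ((y 0 : ℕ)) *
          muP (N + 1) ^ (∑ j' : Fin N,
            (if Odd (N - j'.val) then 1 else 0) * (y j'.succ : ℕ)))
            ((⟨N + 1 - 1, by omega⟩ : Fin (N + 1)), false) =
          π ((⟨N + 1 - 1, by omega⟩ : Fin (N + 1)), false) := by
        conv_rhs => rw [hy']
        exact (eval_decomp N _ _ _).symm
      obtain ⟨hy0, hyodd⟩ := Gamma_mu_inj hn hy0lt hk₀ (hvalY.trans hval.symm)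
      have hμY : muP (N + 1) ^ (∑ j' : Fin N,
          (if Odd (N - j'.val) then 1 else 0) * (y j'.succ : ℕ)) = muP (N + 1) ^ t :=
        muP_pow_congr' hyodd
      have hyκb : ∀ j' : Fin N, ((y j'.succ : ℕ)) < 2 * (N - j'.val) := by
        intro j'
        have h2 : mD (N + 1) j'.succ = 2 * (N - j'.val) := by
          simp only [mD, Fin.val_succ]
          rw [if_neg (by omega)]
          congr 1
          omega
        exact lt_of_lt_of_eq (y j'.succ).isLt h2
      have hbeq : bprod (N + 1) N (fun j' => (y j'.succ : ℕ)) = bprod (N + 1) N κ := by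
        have e1 : psiP (N + 1) (deltaP (N + 1) (N + 1)) ^ ((y 0 : ℕ)) *
            (bprod (N + 1) N (fun j' => (y j'.succ : ℕ)) *
              muP (N + 1) ^ (∑ j' : Fin N,
                (if Odd (N - j'.val) then 1 else 0) * (y j'.succ : ℕ))) =
            psiP (N + 1) (deltaP (N + 1) (N + 1)) ^ ((y 0 : ℕ)) *
            (bprod (N + 1) N κ * muP (N + 1) ^ (∑ j' : Fin N,
                (if Odd (N - j'.val) then 1 else 0) * (y j'.succ : ℕ))) := by
          rw [← hy', hy0, hμY, hπmul, hκ, mul_assoc]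
          congr 1
          exact ((muP_comm_bprod (n := N + 1) (m := N) (by omega) κ).pow_left t).eq
        have e2 := mul_left_cancel e1
        exact mul_right_cancel e2
      have hκeq : (fun j' : Fin N => ((y j'.succ : ℕ))) = κ :=
        Q_unique (by omega) _ _ hyκb hκb hbeq
      funext j
      induction j using Fin.cases with
      | zero =>
        ext
        simp only [Fin.cases_zero]
        exact hy0
      | succ j' =>
        ext
        simp only [Fin.cases_succ]
        exact congrFun hκeq j'

end Dev

/-- Every element `π` of the alternating subgroup `B_n^+` of the
hyperoctahedral group has a unique presentation `π = γ_n^{k_n} γ_{n-1}^{k_{n-1}} ⋯ γ_1^{k_1}`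
with `0 ≤ k_n < n` and `0 ≤ k_i < 2i` for `1 ≤ i ≤ n-1`. -/
theorem gamma_uniqueProd_Bplus (n : ℕ) :
    ∀ π ∈ BplusSet n,
      ∃! k : (j : Fin n) → Fin (mD n j), π = prodPow (cSeq n) fun j => (k j : ℕ) := by
  exact gamma_uniqueProd_Bplus_aux n
end

section
/- For any prime p, the complex reflection group G(p², p, p) has no perfect Hilbertian basis; explicitly, there is no perfect basis (t_0, t_1, …, t_{p−1}) of G(p², p, p) whose multiset of element orders equals {p², p², 2p², 3p², …, (p−1)p²} (i.e., a basis with, after reordering, ord(t_0) = p², ord(t_i) = (i+1)p² for 1 ≤ i ≤ p−2, and ord(t_{p−1}) = p²). -/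
/-- The wreath product `G(r,n) = Z_r ≀ S_n`: pairs `((c_1,…,c_n); π)` with `c_i ∈ Z_r`,
`π ∈ S_n`. -/
@[ext]
structure WreathZ (r n : ℕ) where
  c : Fin n → ZMod r
  pi : Equiv.Perm (Fin n)

namespace WreathZ

variable {r n : ℕ}

instance : Mul (WreathZ r n) :=
  ⟨fun x y => ⟨fun i => x.c i + y.c (x.pi⁻¹ i), x.pi * y.pi⟩⟩

instance : One (WreathZ r n) := ⟨⟨0, 1⟩⟩

instance : Inv (WreathZ r n) := ⟨fun x => ⟨fun i => -x.c (x.pi i), x.pi⁻¹⟩⟩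

@[simp] lemma mul_c (x y : WreathZ r n) : (x * y).c = fun i => x.c i + y.c (x.pi⁻¹ i) := rfl
@[simp] lemma mul_pi (x y : WreathZ r n) : (x * y).pi = x.pi * y.pi := rfl
@[simp] lemma one_c : (1 : WreathZ r n).c = 0 := rfl
@[simp] lemma one_pi : (1 : WreathZ r n).pi = 1 := rfl
@[simp] lemma inv_c (x : WreathZ r n) : x⁻¹.c = fun i => -x.c (x.pi i) := rfl
@[simp] lemma inv_pi (x : WreathZ r n) : x⁻¹.pi = x.pi⁻¹ := rfl

instance : Group (WreathZ r n) where
  mul_assoc x y z := by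
    ext i
    · simp [add_assoc, Equiv.Perm.mul_apply]
    · simp [mul_assoc]
  one_mul x := by ext i <;> simp
  mul_one x := by ext i <;> simp
  inv_mul_cancel x := by
    ext i
    · simp [Equiv.Perm.mul_apply]
    · simp

end WreathZ

/-- The complex reflection group `G(r,p,n)`: the subgroup of `G(r,n)` of elements whose
color sum is `0` modulo `p`. -/
def Grpn (r p n : ℕ) (h : p ∣ r) : Subgroup (WreathZ r n) where
  carrier := {x | ZMod.castHom h (ZMod p) (∑ i, x.c i) = 0}
  one_mem' := by simp
  mul_mem' := by
    intro a b ha hb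
    simp only [Set.mem_setOf_eq, WreathZ.mul_c] at *
    rw [Finset.sum_add_distrib, map_add, ha, Equiv.sum_comp a.pi⁻¹ b.c, hb, add_zero]
  inv_mem' := by
    intro a ha
    simp only [Set.mem_setOf_eq, WreathZ.inv_c] at *
    rw [show (∑ x : Fin n, -a.c (a.pi x)) = -∑ x : Fin n, a.c (a.pi x) by
      rw [Finset.sum_neg_distrib]]
    rw [map_neg, Equiv.sum_comp a.pi (fun i => a.c i), ha, neg_zero]

namespace NPB

open WreathZ

variable {r n : ℕ}

/-- projection to the permutation part, as a monoid hom -/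
def piHom (r n : ℕ) : WreathZ r n →* Equiv.Perm (Fin n) where
  toFun := WreathZ.pi
  map_one' := rfl
  map_mul' _ _ := rfl

lemma pi_pow (x : WreathZ r n) (k : ℕ) : (x ^ k).pi = x.pi ^ k :=
  map_pow (piHom r n) x k

lemma pow_c_of_pi_one (y : WreathZ r n) (h : y.pi = 1) (k : ℕ) :
    (y ^ k).pi = 1 ∧ ∀ i, (y ^ k).c i = k • y.c i := by
  induction k with
  | zero => simp
  | succ k ih =>
    rw [pow_succ]
    refine ⟨by simp [ih.1, h], fun i => ?_⟩
    simp [ih.1, ih.2 i, h, succ_nsmul, add_one_mul]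

/-- color-sum -/
def sfun (x : WreathZ r n) : ZMod r := ∑ i, x.c i

lemma sfun_mul (x y : WreathZ r n) : sfun (x * y) = sfun x + sfun y := by
  unfold sfun
  simp only [mul_c]
  rw [Finset.sum_add_distrib, Equiv.sum_comp x.pi⁻¹ y.c]

lemma sfun_one : sfun (1 : WreathZ r n) = 0 := by simp [sfun]

lemma sfun_pow (x : WreathZ r n) (k : ℕ) : sfun (x ^ k) = k • sfun x := by
  induction k with
  | zero => simp [sfun_one]
  | succ k ih => rw [pow_succ, sfun_mul, ih, succ_nsmul]

lemma sfun_listProd (l : List (WreathZ r n)) (h : ∀ x ∈ l, sfun x = 0) :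
    sfun l.prod = 0 := by
  induction l with
  | nil => simpa using sfun_one
  | cons x l ih =>
    rw [List.prod_cons, sfun_mul, h x List.mem_cons_self,
      ih (fun y hy => h y (List.mem_cons_of_mem x hy)), add_zero]

/-- the "pure colors of additive order dividing p" predicate -/
def Wpred (p : ℕ) (z : WreathZ (p ^ 2) p) : Prop :=
  z.pi = 1 ∧ ∀ i, (p : ℕ) • z.c i = 0

lemma Wpred_one (p : ℕ) : Wpred p 1 := ⟨rfl, by simp⟩

lemma Wpred_mul {p : ℕ} {x y : WreathZ (p ^ 2) p} (hx : Wpred p x) (hy : Wpred p y) :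
    Wpred p (x * y) := by
  refine ⟨by simp [hx.1, hy.1], fun i => ?_⟩
  simp [smul_add, hx.2 i, hy.2 _]

lemma Wpred_pow {p : ℕ} {x : WreathZ (p ^ 2) p} (hx : Wpred p x) (k : ℕ) :
    Wpred p (x ^ k) := by
  induction k with
  | zero => simpa using Wpred_one p
  | succ k ih => rw [pow_succ]; exact Wpred_mul ih hx

lemma Wpred_listProd {p : ℕ} (l : List (WreathZ (p ^ 2) p)) (h : ∀ x ∈ l, Wpred p x) :
    Wpred p l.prod := by
  induction l with
  | nil => simpa using Wpred_one p
  | cons x l ih =>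
    rw [List.prod_cons]
    exact Wpred_mul (h x List.mem_cons_self)
      (ih fun y hy => h y (List.mem_cons_of_mem x hy))

lemma smul_of_castHom_eq_zero {p : ℕ} (hp : p.Prime) (z : ZMod (p ^ 2))
    (h : ZMod.castHom (dvd_pow_self p two_ne_zero) (ZMod p) z = 0) : (p : ℕ) • z = 0 := by
  haveI : NeZero p := ⟨hp.pos.ne'⟩
  haveI : NeZero (p ^ 2) := ⟨pow_ne_zero 2 hp.pos.ne'⟩
  have hv : (p : ℕ) ∣ z.val := by
    rwa [ZMod.castHom_apply, ← ZMod.natCast_val, ZMod.natCast_eq_zero_iff] at h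
  obtain ⟨k, hk⟩ := hv
  have hz : z = ((z.val : ℕ) : ZMod (p ^ 2)) := by rw [ZMod.natCast_val, ZMod.cast_id]
  rw [hz, nsmul_eq_mul, ← Nat.cast_mul, hk, ← mul_assoc, ← pow_two, Nat.cast_mul,
    ZMod.natCast_self, zero_mul]

lemma dvd_val_of_smul_eq_zero {p : ℕ} (hp : p.Prime) (z : ZMod (p ^ 2))
    (h : (p : ℕ) • z = 0) : p ∣ z.val := by
  haveI : NeZero (p ^ 2) := ⟨pow_ne_zero 2 hp.pos.ne'⟩
  have h2 : ((p * z.val : ℕ) : ZMod (p ^ 2)) = 0 := by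
    rw [Nat.cast_mul, ZMod.natCast_val, ZMod.cast_id, ← nsmul_eq_mul, h]
  rw [ZMod.natCast_eq_zero_iff] at h2
  have h3 : p * p ∣ p * z.val := by rw [← pow_two]; exact h2
  exact (Nat.mul_dvd_mul_iff_left hp.pos).mp h3

lemma lemA {p : ℕ} (hp : p.Prime) (x : WreathZ (p ^ 2) p) (hx : x ^ p ^ 2 = 1) :
    Wpred p (x ^ p) := by
  have hpi2 : x.pi ^ p ^ 2 = 1 := by
    rw [← pi_pow, hx, one_pi]
  have hdvd1 : orderOf x.pi ∣ p ^ 2 := orderOf_dvd_of_pow_eq_one hpi2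
  have hdvd2 : orderOf x.pi ∣ Nat.factorial p := by
    have h := orderOf_dvd_card (x := x.pi)
    rwa [Fintype.card_perm, Fintype.card_fin] at h
  have hdvdp : orderOf x.pi ∣ p := by
    obtain ⟨j, hj, he⟩ := (Nat.dvd_prime_pow hp).mp hdvd1
    interval_cases j
    · rw [he, pow_zero]; exact one_dvd _
    · rw [he, pow_one]
    · exfalso
      rw [he] at hdvd2
      have hfac : Nat.factorial p = p * Nat.factorial (p - 1) :=
        (Nat.mul_factorial_pred hp.pos.ne').symm
      rw [hfac, pow_two] at hdvd2
      have hdp := (Nat.mul_dvd_mul_iff_left hp.pos).mp hdvd2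
      have hle := (Nat.Prime.dvd_factorial hp).mp hdp
      have := hp.two_le
      omega
  have hpip : x.pi ^ p = 1 := orderOf_dvd_iff_pow_eq_one.mp hdvdp
  have hypi : (x ^ p).pi = 1 := by rw [pi_pow, hpip]
  refine ⟨hypi, fun i => ?_⟩
  have hyp : (x ^ p) ^ p = 1 := by rw [← pow_mul, ← pow_two]; exact hx
  have h2 := (pow_c_of_pi_one (x ^ p) hypi p).2 i
  rw [hyp] at h2
  simpa using h2.symm

lemma prodPow_coe {G : Type*} [Group G] (H : Subgroup G) {n : ℕ} (a : Fin n → H)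
    (k : Fin n → ℕ) :
    ((prodPow a k : H) : G) = (List.ofFn fun i => ((a i : G) ^ k i)).prod := by
  calc ((prodPow a k : H) : G) = H.subtype (List.ofFn fun i => a i ^ k i).prod := rfl
    _ = _ := by rw [map_list_prod, List.map_ofFn]; simp [Function.comp_def]

end NPB

/-- Abbreviation for the group `G(p²,p,p)`. -/
abbrev Gp (p : ℕ) : Subgroup (WreathZ (p ^ 2) p) := Grpn (p ^ 2) p p (dvd_pow_self p two_ne_zero)

open NPB WreathZ in
/-- For any prime `p`, the complex reflection group `G(p², p, p)` has
no perfect Hilbertian basis: there is no perfect basis `(t_0, t_1, …, t_{p-1})` of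
`G(p², p, p)` whose multiset of element orders is `{p², p², 2p², 3p², …, (p-1)p²}`. -/
theorem no_perfect_hilbertian_basis (p : ℕ) (hp : p.Prime) :
    ¬ ∃ t : Fin p → (Grpn (p ^ 2) p p (dvd_pow_self p two_ne_zero)),
        IsPerfectBasis t ∧
        Multiset.map (fun i => orderOf (t i)) Finset.univ.val
          = p ^ 2 ::ₘ Multiset.map (fun i => (i + 1) * p ^ 2) (Multiset.range (p - 1)) := by
  rintro ⟨t, hbasis, hmult⟩
  haveI : NeZero p := ⟨hp.pos.ne'⟩
  haveI : NeZero (p ^ 2) := ⟨pow_ne_zero 2 hp.pos.ne'⟩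
  haveI : Finite (WreathZ (p ^ 2) p) :=
    Finite.of_injective (fun z => (z.c, z.pi)) (fun x y h => by
      rw [Prod.mk.injEq] at h; exact WreathZ.ext h.1 h.2)
  -- orders are positive multiples of p²
  have horder : ∀ i, ∃ mm : ℕ, 0 < mm ∧ orderOf (t i) = mm * p ^ 2 := by
    intro i
    have hmem : orderOf (t i) ∈ Multiset.map (fun i => orderOf (t i)) Finset.univ.val :=
      Multiset.mem_map_of_mem _ (Finset.mem_val.mpr (Finset.mem_univ i))
    rw [hmult] at hmem
    rcases Multiset.mem_cons.mp hmem with h | h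
    · exact ⟨1, one_pos, by rw [h, one_mul]⟩
    · obtain ⟨j, _, hje⟩ := Multiset.mem_map.mp h
      exact ⟨j + 1, Nat.succ_pos j, hje.symm⟩
  choose m hm hord using horder
  set a : Fin p → WreathZ (p ^ 2) p := fun i => ((t i : WreathZ (p ^ 2) p)) with haa
  have hordc : ∀ i, orderOf (a i) = m i * p ^ 2 := fun i =>
    (orderOf_injective (Gp p).subtype Subtype.coe_injective (t i)).trans (hord i)
  have hx1 : ∀ i, (a i ^ m i) ^ p ^ 2 = 1 := fun i => by
    rw [← pow_mul, ← hordc i]; exact pow_orderOf_eq_one _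
  have hupred : ∀ i, Wpred p (a i ^ (m i * p)) := fun i => by
    have h := lemA hp (a i ^ m i) (hx1 i)
    rwa [← pow_mul] at h
  have hps : ∀ i, (p : ℕ) • sfun (a i) = 0 := fun i =>
    smul_of_castHom_eq_zero hp _ (t i).2
  have hus : ∀ i, sfun (a i ^ (m i * p)) = 0 := fun i => by
    rw [sfun_pow, mul_smul, hps i, smul_zero]
  -- the injection Θ'
  have hbound : ∀ (i : Fin p) (j : Fin p), m i * p * (j : ℕ) < orderOf (t i) := by
    intro i j
    rw [hord i, pow_two, ← mul_assoc]
    have hmp : 0 < m i * p := Nat.mul_pos (hm i) hp.pos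
    exact (Nat.mul_lt_mul_left hmp).2 j.isLt
  let K : (Fin p → Fin p) → ((i : Fin p) → Fin (orderOf (t i))) :=
    fun j i => ⟨m i * p * (j i : ℕ), hbound i (j i)⟩
  let Θ : (Fin p → Fin p) → Gp p := fun j => prodPow t (fun i => (K j i : ℕ))
  have hΘinj : Function.Injective Θ := by
    intro j j' hjj
    obtain ⟨k, -, huniq⟩ := hbasis (Θ j)
    have e1 : K j = k := huniq (K j) rfl
    have e2 : K j' = k := huniq (K j') hjj
    funext i
    have hv : m i * p * ((j i : ℕ)) = m i * p * ((j' i : ℕ)) :=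
      congrArg Fin.val (congrFun (e1.trans e2.symm) i)
    have hmp : 0 < m i * p := Nat.mul_pos (hm i) hp.pos
    exact Fin.ext (Nat.eq_of_mul_eq_mul_left hmp hv)
  have hΘcoe : ∀ j, ((Θ j : Gp p) : WreathZ (p ^ 2) p) =
      (List.ofFn fun i => a i ^ (m i * p * (j i : ℕ))).prod := fun j => by
    rw [show ((Θ j : Gp p) : WreathZ (p ^ 2) p) =
      ((prodPow t (fun i => (K j i : ℕ)) : Gp p) : WreathZ (p ^ 2) p) from rfl, prodPow_coe]
  have hΘpred : ∀ j, Wpred p ((Θ j : Gp p) : WreathZ (p ^ 2) p) := fun j => by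
    rw [hΘcoe j]
    apply Wpred_listProd
    rw [List.forall_mem_ofFn_iff]
    intro i
    rw [pow_mul]
    exact Wpred_pow (hupred i) _
  have hΘs : ∀ j, sfun ((Θ j : Gp p) : WreathZ (p ^ 2) p) = 0 := fun j => by
    rw [hΘcoe j]
    apply sfun_listProd
    rw [List.forall_mem_ofFn_iff]
    intro i
    rw [pow_mul, sfun_pow, hus i, smul_zero]
  -- the finite set W and the two injections
  let W := {x : Gp p // Wpred p ((x : Gp p) : WreathZ (p ^ 2) p)}
  let Θ' : (Fin p → Fin p) → W := fun j => ⟨Θ j, hΘpred j⟩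
  have hΘ'inj : Function.Injective Θ' := fun j j' h =>
    hΘinj (congrArg Subtype.val h)
  let ι : W → (Fin p → Fin p) := fun x i =>
    ⟨((((x : Gp p) : WreathZ (p ^ 2) p)).c i).val / p, by
      rw [Nat.div_lt_iff_lt_mul hp.pos, ← pow_two]
      exact ZMod.val_lt _⟩
  have hιinj : Function.Injective ι := by
    intro x y h
    have hc : ∀ i, (((x : Gp p) : WreathZ (p ^ 2) p)).c i = (((y : Gp p) : WreathZ (p ^ 2) p)).c i := by
      intro i
      have hdx := dvd_val_of_smul_eq_zero hp _ (x.2.2 i)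
      have hdy := dvd_val_of_smul_eq_zero hp _ (y.2.2 i)
      have hq := congrArg Fin.val (congrFun h i)
      have hv : ((((x : Gp p) : WreathZ (p ^ 2) p)).c i).val
          = ((((y : Gp p) : WreathZ (p ^ 2) p)).c i).val := by
        rw [← Nat.div_mul_cancel hdx, ← Nat.div_mul_cancel hdy]
        exact congrArg (· * p) hq
      exact ZMod.val_injective _ hv
    exact Subtype.ext (Subtype.ext (WreathZ.ext (funext hc) (x.2.1.trans y.2.1.symm)))
  have hcard : Nat.card (Fin p → Fin p) = Nat.card W :=
    le_antisymm (Nat.card_le_card_of_injective Θ' hΘ'inj)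
      (Nat.card_le_card_of_injective ι hιinj)
  have hbij : Function.Bijective Θ' :=
    (Nat.bijective_iff_injective_and_card Θ').mpr ⟨hΘ'inj, hcard⟩
  -- the element w0 = ((p,0,…,0);1)
  have hw0mem : (⟨fun i => if i = 0 then ((p : ℕ) : ZMod (p ^ 2)) else 0, 1⟩ :
      WreathZ (p ^ 2) p) ∈ Gp p := by
    show ZMod.castHom (dvd_pow_self p two_ne_zero) (ZMod p)
      (∑ i : Fin p, if i = 0 then ((p : ℕ) : ZMod (p ^ 2)) else 0) = 0
    rw [Finset.sum_ite_eq' Finset.univ (0 : Fin p)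
      (fun _ => ((p : ℕ) : ZMod (p ^ 2)))]
    simp
  let w0 : Gp p := ⟨⟨fun i => if i = 0 then ((p : ℕ) : ZMod (p ^ 2)) else 0, 1⟩, hw0mem⟩
  have hw0pred : Wpred p ((w0 : Gp p) : WreathZ (p ^ 2) p) := by
    refine ⟨rfl, fun i => ?_⟩
    show (p : ℕ) • (if i = 0 then ((p : ℕ) : ZMod (p ^ 2)) else 0) = 0
    by_cases hi : i = 0
    · rw [if_pos hi, nsmul_eq_mul, ← Nat.cast_mul, ← pow_two, ZMod.natCast_self]
    · rw [if_neg hi, smul_zero]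
  obtain ⟨j, hj⟩ := hbij.2 ⟨w0, hw0pred⟩
  have hval : Θ j = w0 := congrArg Subtype.val hj
  have hs := hΘs j
  rw [hval] at hs
  have hsw0 : sfun ((w0 : Gp p) : WreathZ (p ^ 2) p) = ((p : ℕ) : ZMod (p ^ 2)) := by
    show (∑ i : Fin p, if i = 0 then ((p : ℕ) : ZMod (p ^ 2)) else 0)
      = ((p : ℕ) : ZMod (p ^ 2))
    rw [Finset.sum_ite_eq' Finset.univ (0 : Fin p)
      (fun _ => ((p : ℕ) : ZMod (p ^ 2)))]
    simp
  rw [hsw0, ZMod.natCast_eq_zero_iff] at hs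
  have h1 := Nat.le_of_dvd hp.pos hs
  have h2 := hp.two_le
  rw [pow_two] at h1
  nlinarith
end
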